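/- Let f : I → ℝ² be a fixed point of the Read–Bajraktarević operator, i.e. a continuous function with f(L_j(t)) = F_j(t, f(t)) for all t ∈ I and j = 1,…,N, with f(t_j) = (v_j, w_j) for all j and with f(t) ∈ K for all t ∈ I. Then the graph G(f) = {(t, f(t)) : t ∈ I} ⊂ I × K is the attractor of the iterated function system {I × K; g_1,…,g_N}, where g_j(t,v,w) = (L_j(t), F_j(t,v,w)): namely G(f) is a nonempty compact set satisfying G(f) = ⋃_{j=1}^N g_j(G(f)), and it is the unique nonempty compact subset of I × K with this property. -/

import Mathlib

open Set

/-- Weighted ℓ¹ distance on ℝ × ℝ × ℝ used for the Edelstein contraction argument. -/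
noncomputable def D1 (θ : ℝ) (P Q : ℝ × ℝ × ℝ) : ℝ :=
  θ * |P.1 - Q.1| + (|P.2.1 - Q.2.1| + |P.2.2 - Q.2.2|)

lemma D1_nonneg {θ : ℝ} (hθ : 0 ≤ θ) (P Q : ℝ × ℝ × ℝ) : 0 ≤ D1 θ P Q := by
  have := abs_nonneg (P.1 - Q.1); have := abs_nonneg (P.2.1 - Q.2.1)
  have := abs_nonneg (P.2.2 - Q.2.2)
  unfold D1; nlinarith

lemma D1_self (θ : ℝ) (P : ℝ × ℝ × ℝ) : D1 θ P P = 0 := by simp [D1]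

lemma D1_triangle {θ : ℝ} (hθ : 0 ≤ θ) (P Q R : ℝ × ℝ × ℝ) :
    D1 θ P R ≤ D1 θ P Q + D1 θ Q R := by
  unfold D1
  have h1 : |P.1 - R.1| ≤ |P.1 - Q.1| + |Q.1 - R.1| := abs_sub_le _ _ _
  have h2 : |P.2.1 - R.2.1| ≤ |P.2.1 - Q.2.1| + |Q.2.1 - R.2.1| := abs_sub_le _ _ _
  have h3 : |P.2.2 - R.2.2| ≤ |P.2.2 - Q.2.2| + |Q.2.2 - R.2.2| := abs_sub_le _ _ _
  nlinarith

lemma D1_eq_zero {θ : ℝ} (hθ : 0 < θ) {P Q : ℝ × ℝ × ℝ} (h : D1 θ P Q = 0) : P = Q := by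
  have h1 := abs_nonneg (P.1 - Q.1); have h2 := abs_nonneg (P.2.1 - Q.2.1)
  have h3 := abs_nonneg (P.2.2 - Q.2.2)
  unfold D1 at h
  have e1 : |P.1 - Q.1| = 0 := by nlinarith
  have e2 : |P.2.1 - Q.2.1| = 0 := by nlinarith
  have e3 : |P.2.2 - Q.2.2| = 0 := by nlinarith
  rw [abs_eq_zero, sub_eq_zero] at e1 e2 e3
  exact Prod.ext e1 (Prod.ext e2 e3)

lemma D1_continuous (θ : ℝ) (P : ℝ × ℝ × ℝ) : Continuous (fun Q => D1 θ P Q) := by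
  unfold D1; fun_prop

lemma D1_le_dist {θ : ℝ} (hθ : 0 ≤ θ) (P Q : ℝ × ℝ × ℝ) :
    D1 θ P Q ≤ (θ + 2) * dist P Q := by
  have h1 : |P.1 - Q.1| ≤ dist P Q := by
    rw [Prod.dist_eq]; exact le_trans (le_of_eq (Real.dist_eq _ _).symm) (le_max_left _ _)
  have h2 : |P.2.1 - Q.2.1| ≤ dist P Q := by
    rw [Prod.dist_eq, Prod.dist_eq]
    refine le_trans ?_ (le_max_right _ _)
    exact le_trans (le_of_eq (Real.dist_eq _ _).symm) (le_max_left _ _)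
  have h3 : |P.2.2 - Q.2.2| ≤ dist P Q := by
    rw [Prod.dist_eq, Prod.dist_eq]
    refine le_trans ?_ (le_max_right _ _)
    exact le_trans (le_of_eq (Real.dist_eq _ _).symm) (le_max_right _ _)
  have hd : 0 ≤ dist P Q := dist_nonneg
  unfold D1; nlinarith

/-- Uniqueness half: if `A` and `B` are nonempty compact subsets of `X`, invariant under an
IFS whose maps are Edelstein contractions on `X` w.r.t. `D1 θ`, then `A ⊆ B`. -/
lemma subset_of_invariant {ι : Type*} (J : Finset ι) (g : ι → ℝ × ℝ × ℝ → ℝ × ℝ × ℝ)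
    (X : Set (ℝ × ℝ × ℝ)) (θ : ℝ) (hθ : 1 ≤ θ)
    (hcontr : ∀ j ∈ J, ∀ P ∈ X, ∀ Q ∈ X, P ≠ Q → D1 θ (g j P) (g j Q) < D1 θ P Q)
    (A B : Set (ℝ × ℝ × ℝ)) (hAX : A ⊆ X) (hBX : B ⊆ X)
    (hAne : A.Nonempty) (hBne : B.Nonempty) (hAc : IsCompact A) (hBc : IsCompact B)
    (hAeq : A = ⋃ j ∈ J, g j '' A) (hBeq : B = ⋃ j ∈ J, g j '' B) :
    A ⊆ B := by
  have hθ0 : (0:ℝ) ≤ θ := by linarith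
  set φ : ℝ × ℝ × ℝ → ℝ := fun P => sInf ((fun Q => D1 θ P Q) '' B) with hφ
  have hbdd : ∀ P, BddBelow ((fun Q => D1 θ P Q) '' B) := by
    intro P
    exact ⟨0, by rintro y ⟨Q, hQ, rfl⟩; exact D1_nonneg hθ0 P Q⟩
  have hφle : ∀ P, ∀ Q ∈ B, φ P ≤ D1 θ P Q := by
    intro P Q hQ
    exact csInf_le (hbdd P) (Set.mem_image_of_mem _ hQ)
  have hφ0 : ∀ P, 0 ≤ φ P := by
    intro P
    refine le_csInf (hBne.image _) ?_
    rintro y ⟨Q, hQ, rfl⟩; exact D1_nonneg hθ0 P Q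
  have hφex : ∀ P, ∃ Q ∈ B, φ P = D1 θ P Q := by
    intro P
    obtain ⟨Q, hQ, hmin⟩ := hBc.exists_isMinOn hBne (D1_continuous θ P).continuousOn
    refine ⟨Q, hQ, le_antisymm (hφle P Q hQ) ?_⟩
    refine le_csInf (hBne.image _) ?_
    rintro y ⟨Q', hQ', rfl⟩; exact hmin hQ'
  have hφlip : ∀ P P', φ P ≤ φ P' + D1 θ P P' := by
    intro P P'
    obtain ⟨Q, hQ, hEq⟩ := hφex P'
    calc φ P ≤ D1 θ P Q := hφle P Q hQ
      _ ≤ D1 θ P P' + D1 θ P' Q := D1_triangle hθ0 P P' Q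
      _ = φ P' + D1 θ P P' := by rw [hEq]; ring
  have hφcont : Continuous φ := by
    refine (LipschitzWith.of_dist_le_mul (K := ⟨θ + 2, by linarith⟩) ?_).continuous
    intro P P'
    rw [Real.dist_eq, abs_sub_le_iff]
    constructor
    · have := hφlip P P'
      have hle := D1_le_dist hθ0 P P'
      push_cast
      change φ P - φ P' ≤ (θ + 2) * dist P P'
      linarith
    · have := hφlip P' P
      have hle := D1_le_dist hθ0 P' P
      rw [dist_comm P P'] at *
      push_cast
      change φ P' - φ P ≤ (θ + 2) * dist P' P
      linarith
  obtain ⟨Pm, hPm, hmax⟩ := hAc.exists_isMaxOn hAne hφcont.continuousOn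
  have hgB : ∀ j ∈ J, ∀ Q ∈ B, g j Q ∈ B := by
    intro j hj Q hQ
    rw [hBeq]
    exact Set.mem_biUnion hj (Set.mem_image_of_mem _ hQ)
  have hPm0 : φ Pm ≤ 0 := by
    have hPmU : Pm ∈ ⋃ j ∈ J, g j '' A := hAeq ▸ hPm
    obtain ⟨j, hj, Qa, hQa, hgQa⟩ := by
      simpa only [Set.mem_iUnion, Set.mem_image, exists_prop] using hPmU
    obtain ⟨Qb, hQb, hEq⟩ := hφex Qa
    by_cases hqq : Qa = Qb
    · subst hqq
      have : Pm ∈ B := hgQa ▸ hgB j hj Qa hQb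
      calc φ Pm ≤ D1 θ Pm Pm := hφle Pm Pm this
        _ = 0 := D1_self θ Pm
    · exfalso
      have h1 : φ Pm ≤ D1 θ (g j Qa) (g j Qb) := by
        rw [← hgQa] at *
        exact hφle _ _ (hgB j hj Qb hQb)
      have h2 : D1 θ (g j Qa) (g j Qb) < D1 θ Qa Qb :=
        hcontr j hj Qa (hAX hQa) Qb (hBX hQb) hqq
      have h3 : φ Qa ≤ φ Pm := hmax hQa
      rw [← hEq] at h2
      linarith
  intro P hP
  have : φ P = 0 := le_antisymm (le_trans (hmax hP) hPm0) (hφ0 P)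
  obtain ⟨Q, hQ, hEq⟩ := hφex P
  have : P = Q := D1_eq_zero (lt_of_lt_of_le zero_lt_one hθ) (hEq.symm.trans this)
  exact this ▸ hQ


/-- The graph of the fixed point `f` of the Read–Bajraktarević operator is the
attractor of the IFS `{I × K; g 1, …, g N}` with `g j (t,v,w) = (L j t, F j t (v,w))`:
it is a nonempty compact set equal to the union of its images under the `g j`, and it is
the unique nonempty compact subset of `I × K` with this property. -/
theorem graph_is_attractor
    (N : ℕ) (hN : 0 < N)
    (t v w : ℕ → ℝ)
    (htmono : ∀ j, j < N → t j < t (j + 1))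
    (a fc : ℕ → ℝ) (L : ℕ → ℝ → ℝ)
    (hL : ∀ j, 1 ≤ j → j ≤ N → ∀ x : ℝ, L j x = a j * x + fc j)
    (ha : ∀ j, 1 ≤ j → j ≤ N → a j ≠ 0 ∧ |a j| < 1)
    (hL0 : ∀ j, 1 ≤ j → j ≤ N → L j (t 0) = t (j - 1))
    (hLN : ∀ j, 1 ≤ j → j ≤ N → L j (t N) = t j)
    (b c d e p q : ℕ → ℝ → ℝ)
    (hLip : ∀ j, 1 ≤ j → j ≤ N → ∀ g ∈ ([b j, c j, d j, e j, p j, q j] : List (ℝ → ℝ)),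
      ∃ Kg : NNReal, LipschitzOnWith Kg g (Set.Icc (t 0) (t N)))
    (hbd : ∀ j, 1 ≤ j → j ≤ N → ∃ B D : ℝ, B + D ≤ 1 ∧
      (∀ x ∈ Set.Icc (t 0) (t N), |b j x| ≤ B) ∧ (∀ x ∈ Set.Icc (t 0) (t N), |d j x| ≤ D))
    (hce : ∀ j, 1 ≤ j → j ≤ N → ∃ C E : ℝ, C + E ≤ 1 ∧
      (∀ x ∈ Set.Icc (t 0) (t N), |c j x| ≤ C) ∧ (∀ x ∈ Set.Icc (t 0) (t N), |e j x| ≤ E))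
    (s r : ℕ → ℝ → ℝ)
    (hs : ∀ j, 1 ≤ j → j ≤ N → ∀ x y : ℝ, x ≠ y → |s j x - s j y| < |x - y|)
    (hr : ∀ j, 1 ≤ j → j ≤ N → ∀ x y : ℝ, x ≠ y → |r j x - r j y| < |x - y|)
    (F : ℕ → ℝ → ℝ × ℝ → ℝ × ℝ)
    (hF : ∀ j x vw, F j x vw = (b j x * s j vw.1 + c j x * r j vw.2 + p j x,
                                d j x * s j vw.1 + e j x * r j vw.2 + q j x))
    (hF0 : ∀ j, 1 ≤ j → j ≤ N → F j (t 0) (v 0, w 0) = (v (j - 1), w (j - 1)))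
    (hFN : ∀ j, 1 ≤ j → j ≤ N → F j (t N) (v N, w N) = (v j, w j))
    (K : Set (ℝ × ℝ)) (hKc : IsCompact K)
    (hKv : ∀ j, j ≤ N → (v j, w j) ∈ K)
    (hKF : ∀ j, 1 ≤ j → j ≤ N → ∀ x ∈ Set.Icc (t 0) (t N), ∀ vw ∈ K, F j x vw ∈ K)
    (f : ℝ → ℝ × ℝ) (hfc : ContinuousOn f (Set.Icc (t 0) (t N)))
    (hfe : ∀ j, 1 ≤ j → j ≤ N → ∀ x ∈ Set.Icc (t 0) (t N), f (L j x) = F j x (f x))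
    (hfi : ∀ j, j ≤ N → f (t j) = (v j, w j))
    (hfK : ∀ x ∈ Set.Icc (t 0) (t N), f x ∈ K) :
    ((fun x => (x, f x)) '' Set.Icc (t 0) (t N)).Nonempty ∧
    IsCompact ((fun x => (x, f x)) '' Set.Icc (t 0) (t N)) ∧
    ((fun x => (x, f x)) '' Set.Icc (t 0) (t N)) =
      ⋃ j ∈ Finset.Icc 1 N, (fun P : ℝ × ℝ × ℝ => (L j P.1, F j P.1 P.2)) ''
        ((fun x => (x, f x)) '' Set.Icc (t 0) (t N)) ∧
    ∀ A : Set (ℝ × ℝ × ℝ), A ⊆ (Set.Icc (t 0) (t N)) ×ˢ K → A.Nonempty → IsCompact A →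
      A = ⋃ j ∈ Finset.Icc 1 N, (fun P : ℝ × ℝ × ℝ => (L j P.1, F j P.1 P.2)) '' A →
      A = (fun x => (x, f x)) '' Set.Icc (t 0) (t N) := by
  -- basic monotonicity facts
  have tlt : ∀ i k : ℕ, i < k → k ≤ N → t i < t k := by
    intro i k hik hkN
    induction k with
    | zero => omega
    | succ n ih =>
      rcases Nat.lt_succ_iff_lt_or_eq.mp hik with h | h
      · exact (ih h (by omega)).trans (htmono n (by omega))
      · subst h; exact htmono i (by omega)
  have tle : ∀ i k : ℕ, i ≤ k → k ≤ N → t i ≤ t k := by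
    intro i k hik hkN
    rcases Nat.lt_or_ge i k with h | h
    · exact (tlt i k h hkN).le
    · have : i = k := le_antisymm hik h
      rw [this]
  have ht0N : t 0 < t N := tlt 0 N hN le_rfl
  -- a j ∈ (0, 1)
  have haj : ∀ j, 1 ≤ j → j ≤ N → 0 < a j ∧ a j < 1 := by
    intro j h1 h2
    have hdiff : a j * (t N - t 0) = t j - t (j - 1) := by
      have e0 := hL0 j h1 h2; have eN := hLN j h1 h2
      rw [hL j h1 h2] at e0 eN
      linarith
    have hjj : t (j - 1) < t j := tlt (j - 1) j (by omega) h2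
    have hapos : 0 < a j := by nlinarith
    exact ⟨hapos, by have := (ha j h1 h2).2; rwa [abs_of_pos hapos] at this⟩
  -- L j maps I into I
  have hLmem : ∀ j, 1 ≤ j → j ≤ N → ∀ x ∈ Icc (t 0) (t N), L j x ∈ Icc (t 0) (t N) := by
    intro j h1 h2 x hx
    obtain ⟨hap, _⟩ := haj j h1 h2
    have e0 := hL0 j h1 h2; have eN := hLN j h1 h2
    rw [hL j h1 h2] at e0 eN ⊢
    have h01 : t 0 ≤ t (j - 1) := tle 0 (j - 1) (by omega) (by omega)
    have hjN : t j ≤ t N := tle j N h2 le_rfl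
    constructor
    · nlinarith [hx.1]
    · nlinarith [hx.2]
  -- covering of I by the subintervals
  have hcover : ∀ x ∈ Icc (t 0) (t N), ∃ j, 1 ≤ j ∧ j ≤ N ∧ t (j - 1) ≤ x ∧ x ≤ t j := by
    intro x hx
    have hex : ∃ k, 1 ≤ k ∧ x ≤ t k := ⟨N, hN, hx.2⟩
    classical
    set j := Nat.find hex with hj
    obtain ⟨hj1, hjx⟩ := Nat.find_spec hex
    have hjN : j ≤ N := Nat.find_min' hex ⟨hN, hx.2⟩
    refine ⟨j, hj1, hjN, ?_, hjx⟩
    rcases Nat.lt_or_ge (j - 1) 1 with h | h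
    · have : j - 1 = 0 := by omega
      rw [this]; exact hx.1
    · have hmin := Nat.find_min hex (m := j - 1) (by omega)
      push_neg at hmin
      exact (hmin h).le
  have hIc : IsCompact (Icc (t 0) (t N)) := isCompact_Icc
  have hgraphcont : ContinuousOn (fun x => (x, f x)) (Icc (t 0) (t N)) :=
    continuousOn_id.prodMk hfc
  have hpart3 : ((fun x => (x, f x)) '' Set.Icc (t 0) (t N)) =
      ⋃ j ∈ Finset.Icc 1 N, (fun P : ℝ × ℝ × ℝ => (L j P.1, F j P.1 P.2)) ''
        ((fun x => (x, f x)) '' Set.Icc (t 0) (t N)) := by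
    apply Subset.antisymm
    · rintro _ ⟨x, hx, rfl⟩
      obtain ⟨j, hj1, hjN, hx1, hx2⟩ := hcover x hx
      obtain ⟨hap, _⟩ := haj j hj1 hjN
      set y := (x - fc j) / a j with hy
      have hLy : L j y = x := by rw [hL j hj1 hjN, hy]; field_simp; ring
      have hyI : y ∈ Icc (t 0) (t N) := by
        have e0 := hL0 j hj1 hjN; have eN := hLN j hj1 hjN
        rw [hL j hj1 hjN] at e0 eN
        constructor
        · rw [hy, le_div_iff₀ hap]; nlinarith
        · rw [hy, div_le_iff₀ hap]; nlinarith
      refine Set.mem_biUnion (show j ∈ Finset.Icc 1 N by rw [Finset.mem_Icc]; omega) ?_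
      refine ⟨(y, f y), ⟨y, hyI, rfl⟩, ?_⟩
      simp only
      rw [← hfe j hj1 hjN y hyI, hLy]
    · intro P hP
      simp only [Set.mem_iUnion, Set.mem_image, exists_prop] at hP
      obtain ⟨j, hj, Q, ⟨x, hx, rfl⟩, rfl⟩ := hP
      rw [Finset.mem_Icc] at hj
      refine ⟨L j x, hLmem j hj.1 hj.2 x hx, ?_⟩
      simp only
      rw [hfe j hj.1 hj.2 x hx]
  refine ⟨⟨(t 0, f (t 0)), t 0, ⟨le_rfl, ht0N.le⟩, rfl⟩,
    hIc.image_of_continuousOn hgraphcont, hpart3, ?_⟩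
  -- Part 4: uniqueness via an Edelstein-contraction argument w.r.t. `D1 θ`
  have hsle : ∀ j, 1 ≤ j → j ≤ N → ∀ x y : ℝ, |s j x - s j y| ≤ |x - y| := by
    intro j h1 h2 x y
    rcases eq_or_ne x y with rfl | h
    · simp
    · exact (hs j h1 h2 x y h).le
  have hrle : ∀ j, 1 ≤ j → j ≤ N → ∀ x y : ℝ, |r j x - r j y| ≤ |x - y| := by
    intro j h1 h2 x y
    rcases eq_or_ne x y with rfl | h
    · simp
    · exact (hr j h1 h2 x y h).le
  obtain ⟨R, hRK⟩ := hKc.isBounded.subset_closedBall 0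
  have hR : ∀ zw ∈ K, |zw.1| ≤ R ∧ |zw.2| ≤ R := by
    intro zw hzw
    have hb := hRK hzw
    rw [Metric.mem_closedBall, dist_zero_right] at hb
    constructor
    · exact le_trans (by rw [← Real.norm_eq_abs]; exact norm_fst_le zw) hb
    · exact le_trans (by rw [← Real.norm_eq_abs]; exact norm_snd_le zw) hb
  -- a uniform Lipschitz-in-`x` bound for `F j x zw`
  have hMex : ∀ j : ℕ, ∃ M : ℝ, 0 ≤ M ∧ (1 ≤ j → j ≤ N →
      ∀ x ∈ Icc (t 0) (t N), ∀ y ∈ Icc (t 0) (t N), ∀ zw ∈ K,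
        |(F j x zw).1 - (F j y zw).1| + |(F j x zw).2 - (F j y zw).2| ≤ M * |x - y|) := by
    intro j
    by_cases hj : 1 ≤ j ∧ j ≤ N
    · obtain ⟨h1, h2⟩ := hj
      obtain ⟨Kb, hKb⟩ := hLip j h1 h2 (b j) (by simp)
      obtain ⟨Kc, hKcc⟩ := hLip j h1 h2 (c j) (by simp)
      obtain ⟨Kd, hKd⟩ := hLip j h1 h2 (d j) (by simp)
      obtain ⟨Ke, hKe⟩ := hLip j h1 h2 (e j) (by simp)
      obtain ⟨Kp, hKp⟩ := hLip j h1 h2 (p j) (by simp)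
      obtain ⟨Kq, hKq⟩ := hLip j h1 h2 (q j) (by simp)
      have hR0 : 0 ≤ R := le_trans (abs_nonneg _) (hR (v 0, w 0) (hKv 0 (by omega))).1
      set S : ℝ := R + |s j 0| with hS
      set T : ℝ := R + |r j 0| with hT
      have hS0 : 0 ≤ S := by positivity
      have hT0 : 0 ≤ T := by positivity
      refine ⟨((Kb : ℝ) + Kd) * S + ((Kc : ℝ) + Ke) * T + ((Kp : ℝ) + Kq), by positivity, ?_⟩
      intro _ _ x hx y hy zw hzw
      have hsb : |s j zw.1| ≤ S := by
        have h1' : |s j zw.1 - s j 0| ≤ |zw.1 - 0| := hsle j h1 h2 _ _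
        have h2' := (hR zw hzw).1
        rw [hS]
        calc |s j zw.1| = |s j zw.1 - s j 0 + s j 0| := by ring_nf
          _ ≤ |s j zw.1 - s j 0| + |s j 0| := abs_add_le _ _
          _ ≤ R + |s j 0| := by rw [sub_zero] at h1'; linarith
      have hrb : |r j zw.2| ≤ T := by
        have h1' : |r j zw.2 - r j 0| ≤ |zw.2 - 0| := hrle j h1 h2 _ _
        have h2' := (hR zw hzw).2
        rw [hT]
        calc |r j zw.2| = |r j zw.2 - r j 0 + r j 0| := by ring_nf
          _ ≤ |r j zw.2 - r j 0| + |r j 0| := abs_add_le _ _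
          _ ≤ R + |r j 0| := by rw [sub_zero] at h1'; linarith
      have lb : |b j x - b j y| ≤ (Kb : ℝ) * |x - y| := by
        have := hKb.dist_le_mul x hx y hy; rwa [Real.dist_eq, Real.dist_eq] at this
      have lc : |c j x - c j y| ≤ (Kc : ℝ) * |x - y| := by
        have := hKcc.dist_le_mul x hx y hy; rwa [Real.dist_eq, Real.dist_eq] at this
      have ld : |d j x - d j y| ≤ (Kd : ℝ) * |x - y| := by
        have := hKd.dist_le_mul x hx y hy; rwa [Real.dist_eq, Real.dist_eq] at this
      have le' : |e j x - e j y| ≤ (Ke : ℝ) * |x - y| := by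
        have := hKe.dist_le_mul x hx y hy; rwa [Real.dist_eq, Real.dist_eq] at this
      have lp : |p j x - p j y| ≤ (Kp : ℝ) * |x - y| := by
        have := hKp.dist_le_mul x hx y hy; rwa [Real.dist_eq, Real.dist_eq] at this
      have lq : |q j x - q j y| ≤ (Kq : ℝ) * |x - y| := by
        have := hKq.dist_le_mul x hx y hy; rwa [Real.dist_eq, Real.dist_eq] at this
      rw [hF, hF]
      simp only
      have e1 : b j x * s j zw.1 + c j x * r j zw.2 + p j x -
          (b j y * s j zw.1 + c j y * r j zw.2 + p j y) =
          (b j x - b j y) * s j zw.1 + (c j x - c j y) * r j zw.2 + (p j x - p j y) := by ring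
      have e2 : d j x * s j zw.1 + e j x * r j zw.2 + q j x -
          (d j y * s j zw.1 + e j y * r j zw.2 + q j y) =
          (d j x - d j y) * s j zw.1 + (e j x - e j y) * r j zw.2 + (q j x - q j y) := by ring
      rw [e1, e2]
      have t1 : |(b j x - b j y) * s j zw.1 + (c j x - c j y) * r j zw.2 + (p j x - p j y)| ≤
          |b j x - b j y| * |s j zw.1| + |c j x - c j y| * |r j zw.2| + |p j x - p j y| := by
        calc _ ≤ |(b j x - b j y) * s j zw.1 + (c j x - c j y) * r j zw.2| + |p j x - p j y| :=
              abs_add_le _ _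
          _ ≤ |(b j x - b j y) * s j zw.1| + |(c j x - c j y) * r j zw.2| + |p j x - p j y| := by
              have := abs_add_le ((b j x - b j y) * s j zw.1) ((c j x - c j y) * r j zw.2)
              linarith
          _ = _ := by rw [abs_mul, abs_mul]
      have t2 : |(d j x - d j y) * s j zw.1 + (e j x - e j y) * r j zw.2 + (q j x - q j y)| ≤
          |d j x - d j y| * |s j zw.1| + |e j x - e j y| * |r j zw.2| + |q j x - q j y| := by
        calc _ ≤ |(d j x - d j y) * s j zw.1 + (e j x - e j y) * r j zw.2| + |q j x - q j y| :=
              abs_add_le _ _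
          _ ≤ |(d j x - d j y) * s j zw.1| + |(e j x - e j y) * r j zw.2| + |q j x - q j y| := by
              have := abs_add_le ((d j x - d j y) * s j zw.1) ((e j x - e j y) * r j zw.2)
              linarith
          _ = _ := by rw [abs_mul, abs_mul]
      have hxy0 : (0:ℝ) ≤ |x - y| := abs_nonneg _
      have m1 : |b j x - b j y| * |s j zw.1| ≤ (Kb : ℝ) * |x - y| * S :=
        mul_le_mul lb hsb (abs_nonneg _) (by positivity)
      have m2 : |c j x - c j y| * |r j zw.2| ≤ (Kc : ℝ) * |x - y| * T :=
        mul_le_mul lc hrb (abs_nonneg _) (by positivity)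
      have m3 : |d j x - d j y| * |s j zw.1| ≤ (Kd : ℝ) * |x - y| * S :=
        mul_le_mul ld hsb (abs_nonneg _) (by positivity)
      have m4 : |e j x - e j y| * |r j zw.2| ≤ (Ke : ℝ) * |x - y| * T :=
        mul_le_mul le' hrb (abs_nonneg _) (by positivity)
      linarith [t1, t2, m1, m2, m3, m4, lp, lq]
    · exact ⟨0, le_rfl, fun h1 h2 => absurd ⟨h1, h2⟩ hj⟩
  choose M hM0 hMb using hMex
  -- the weight θ
  set θ : ℝ := 1 + ∑ j ∈ Finset.Icc 1 N, (M j + 1) / (1 - a j) with hθdef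
  have hterm0 : ∀ j ∈ Finset.Icc 1 N, (0:ℝ) ≤ (M j + 1) / (1 - a j) := by
    intro j hj
    rw [Finset.mem_Icc] at hj
    obtain ⟨_, ha1⟩ := haj j hj.1 hj.2
    have := hM0 j
    exact div_nonneg (by linarith) (by linarith)
  have hθ1 : 1 ≤ θ := by
    rw [hθdef]
    have := Finset.sum_nonneg hterm0
    linarith
  have hθj : ∀ j, 1 ≤ j → j ≤ N → θ * a j + M j + 1 ≤ θ := by
    intro j h1 h2
    have hjm : j ∈ Finset.Icc 1 N := by rw [Finset.mem_Icc]; omega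
    have hsingle := Finset.single_le_sum hterm0 hjm
    obtain ⟨ha0, ha1⟩ := haj j h1 h2
    have h1a : 0 < 1 - a j := by linarith
    have hd : M j + 1 ≤ (θ - 1) * (1 - a j) := by
      rw [← div_le_iff₀ h1a] at *
      calc (M j + 1) / (1 - a j) ≤ ∑ i ∈ Finset.Icc 1 N, (M i + 1) / (1 - a i) := hsingle
        _ = θ - 1 := by rw [hθdef]; ring
    nlinarith
  -- the Edelstein contraction property
  have hcontr : ∀ j ∈ Finset.Icc 1 N, ∀ P ∈ (Icc (t 0) (t N)) ×ˢ K, ∀ Q ∈ (Icc (t 0) (t N)) ×ˢ K,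
      P ≠ Q → D1 θ ((fun P : ℝ × ℝ × ℝ => (L j P.1, F j P.1 P.2)) P)
        ((fun P : ℝ × ℝ × ℝ => (L j P.1, F j P.1 P.2)) Q) < D1 θ P Q := by
    intro j hjm P hP Q hQ hne
    rw [Finset.mem_Icc] at hjm
    obtain ⟨h1, h2⟩ := hjm
    obtain ⟨x, u⟩ := P
    obtain ⟨y, z⟩ := Q
    rw [Set.mem_prod] at hP hQ
    obtain ⟨hxI, huK⟩ := hP
    obtain ⟨hyI, hzK⟩ := hQ
    obtain ⟨ha0, ha1⟩ := haj j h1 h2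
    -- estimate for identical t-argument
    have hFsame : ∀ x' ∈ Icc (t 0) (t N),
        |(F j x' u).1 - (F j x' z).1| + |(F j x' u).2 - (F j x' z).2| ≤
          |s j u.1 - s j z.1| + |r j u.2 - r j z.2| := by
      intro x' hx'
      obtain ⟨B, D, hBD, hB, hD⟩ := hbd j h1 h2
      obtain ⟨C, E, hCE, hC, hE⟩ := hce j h1 h2
      rw [hF, hF]
      simp only
      have e1 : b j x' * s j u.1 + c j x' * r j u.2 + p j x' -
          (b j x' * s j z.1 + c j x' * r j z.2 + p j x') =
          b j x' * (s j u.1 - s j z.1) + c j x' * (r j u.2 - r j z.2) := by ring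
      have e2 : d j x' * s j u.1 + e j x' * r j u.2 + q j x' -
          (d j x' * s j z.1 + e j x' * r j z.2 + q j x') =
          d j x' * (s j u.1 - s j z.1) + e j x' * (r j u.2 - r j z.2) := by ring
      rw [e1, e2]
      have t1 := abs_add_le (b j x' * (s j u.1 - s j z.1)) (c j x' * (r j u.2 - r j z.2))
      have t2 := abs_add_le (d j x' * (s j u.1 - s j z.1)) (e j x' * (r j u.2 - r j z.2))
      rw [abs_mul, abs_mul] at t1 t2
      have hBx := hB x' hx'
      have hDx := hD x' hx'
      have hCx := hC x' hx'
      have hEx := hE x' hx'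
      have hs0 : (0:ℝ) ≤ |s j u.1 - s j z.1| := abs_nonneg _
      have hr0 : (0:ℝ) ≤ |r j u.2 - r j z.2| := abs_nonneg _
      have m1 : |b j x'| * |s j u.1 - s j z.1| ≤ B * |s j u.1 - s j z.1| :=
        mul_le_mul_of_nonneg_right hBx hs0
      have m2 : |d j x'| * |s j u.1 - s j z.1| ≤ D * |s j u.1 - s j z.1| :=
        mul_le_mul_of_nonneg_right hDx hs0
      have m3 : |c j x'| * |r j u.2 - r j z.2| ≤ C * |r j u.2 - r j z.2| :=
        mul_le_mul_of_nonneg_right hCx hr0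
      have m4 : |e j x'| * |r j u.2 - r j z.2| ≤ E * |r j u.2 - r j z.2| :=
        mul_le_mul_of_nonneg_right hEx hr0
      have mBD : (B + D) * |s j u.1 - s j z.1| ≤ 1 * |s j u.1 - s j z.1| :=
        mul_le_mul_of_nonneg_right hBD hs0
      have mCE : (C + E) * |r j u.2 - r j z.2| ≤ 1 * |r j u.2 - r j z.2| :=
        mul_le_mul_of_nonneg_right hCE hr0
      linarith [t1, t2, m1, m2, m3, m4, mBD, mCE]
    have hLdiff : |L j x - L j y| = a j * |x - y| := by
      rw [hL j h1 h2, hL j h1 h2]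
      have : a j * x + fc j - (a j * y + fc j) = a j * (x - y) := by ring
      rw [this, abs_mul, abs_of_pos ha0]
    rcases eq_or_ne x y with rfl | hxy
    · -- same first coordinate: second coordinates differ
      have huz : u ≠ z := by
        intro hc; exact hne (by rw [hc])
      have hstrict : |s j u.1 - s j z.1| + |r j u.2 - r j z.2| < |u.1 - z.1| + |u.2 - z.2| := by
        rcases eq_or_ne u.1 z.1 with h11 | h11
        · have h22 : u.2 ≠ z.2 := fun hc => huz (Prod.ext h11 hc)
          have := hr j h1 h2 u.2 z.2 h22
          have := hsle j h1 h2 u.1 z.1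
          linarith
        · have := hs j h1 h2 u.1 z.1 h11
          have := hrle j h1 h2 u.2 z.2
          linarith
      have hcmp := hFsame x hxI
      unfold D1
      simp only [sub_self, abs_zero, mul_zero]
      linarith
    · -- different first coordinates
      have hxy0 : 0 < |x - y| := abs_pos.mpr (sub_ne_zero.mpr hxy)
      have hcross1 : |(F j x u).1 - (F j y z).1| ≤
          |(F j x u).1 - (F j x z).1| + |(F j x z).1 - (F j y z).1| := abs_sub_le _ _ _
      have hcross2 : |(F j x u).2 - (F j y z).2| ≤
          |(F j x u).2 - (F j x z).2| + |(F j x z).2 - (F j y z).2| := abs_sub_le _ _ _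
      have hsame := hFsame x hxI
      have hmove := hMb j h1 h2 x hxI y hyI z hzK
      have hsu := hsle j h1 h2 u.1 z.1
      have hru := hrle j h1 h2 u.2 z.2
      have hθa := hθj j h1 h2
      unfold D1
      simp only
      rw [hLdiff]
      have hmul : (θ * a j + M j + 1) * |x - y| ≤ θ * |x - y| :=
        mul_le_mul_of_nonneg_right hθa (le_of_lt hxy0)
      linarith [hcross1, hcross2, hsame, hmove, hsu, hru, hmul, hxy0]
  -- conclude
  intro A hAX hAne hAc hAeq
  have hGne : ((fun x => (x, f x)) '' Icc (t 0) (t N)).Nonempty :=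
    ⟨(t 0, f (t 0)), t 0, ⟨le_rfl, ht0N.le⟩, rfl⟩
  have hGc : IsCompact ((fun x => (x, f x)) '' Icc (t 0) (t N)) :=
    hIc.image_of_continuousOn hgraphcont
  have hGX : ((fun x => (x, f x)) '' Icc (t 0) (t N)) ⊆ (Icc (t 0) (t N)) ×ˢ K := by
    rintro _ ⟨x, hx, rfl⟩
    exact Set.mem_prod.mpr ⟨hx, hfK x hx⟩
  apply Subset.antisymm
  · exact subset_of_invariant (Finset.Icc 1 N) (fun j P => (L j P.1, F j P.1 P.2))
      ((Icc (t 0) (t N)) ×ˢ K) θ hθ1 hcontr A _ hAX hGX hAne hGne hAc hGc hAeq hpart3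
  · exact subset_of_invariant (Finset.Icc 1 N) (fun j P => (L j P.1, F j P.1 P.2))
      ((Icc (t 0) (t N)) ×ˢ K) θ hθ1 hcontr _ A hGX hAX hGne hAne hGc hAc hpart3 hAeq
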